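/- Let K ⊂ ℝ be compact with m = min K and M = max K, m < M, and let d ≥ 1. Let γ: [m,M] → ℝ^d be continuous and differentiable at every point t ∈ K, with derivative g(t) := γ'(t), where g: K → ℝ^d is continuous. Let (a_i, b_i), i ≥ 1, be the connected components of [m,M] ∖ K, and suppose for each i there is a C¹ curve ψ^i: [a_i, b_i] → ℝ^d with ψ^i(a_i) = γ(a_i), ψ^i(b_i) = γ(b_i), (ψ^i)'(a_i) = g(a_i), (ψ^i)'(b_i) = g(b_i), and |(ψ^i)'(t) − g(a_i)| ≤ ε_i for all t ∈ (a_i, b_i), where ε_i → 0 as i → ∞. Define Γ: [m,M] → ℝ^d by Γ(t) = γ(t) for t ∈ K and Γ(t) = ψ^i(t) for t ∈ (a_i, b_i). Then Γ is a C¹ curve whose derivative is given by Γ'(t) = g(t) for t ∈ K and Γ'(t) = (ψ^i)'(t) for t ∈ (a_i, b_i). -/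

import Mathlib

open MeasureTheory Set Topology Filter

set_option maxHeartbeats 1000000 in
/-- Gluing lemma: a curve agreeing with `γ` on a compact set `K` and with C¹ interpolating
curves `ψⁱ` on the complementary intervals `(aᵢ, bᵢ)`, whose derivatives approach the
derivative of `γ` at the endpoints, is itself C¹. -/
theorem glued_curve_is_C1 (d : ℕ) (hd : 1 ≤ d)
    (K : Set ℝ) (hK : IsCompact K) (hKne : K.Nonempty)
    (m M : ℝ) (hm : m = sInf K) (hM : M = sSup K) (hmM : m < M)
    (γ g : ℝ → EuclideanSpace ℝ (Fin d))
    (hγcont : ContinuousOn γ (Set.Icc m M))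
    (hγdiff : ∀ t ∈ K, HasDerivWithinAt γ (g t) (Set.Icc m M) t)
    (hgcont : ContinuousOn g K)
    (a b : ℕ → ℝ)
    (haK : ∀ i, a i ∈ K) (hbK : ∀ i, b i ∈ K) (hab : ∀ i, a i ≤ b i)
    (hcover : Set.Icc m M \ K = ⋃ i, Set.Ioo (a i) (b i))
    (hdisj : Pairwise (Function.onFun Disjoint fun i => Set.Ioo (a i) (b i)))
    (ψ ψ' : ℕ → ℝ → EuclideanSpace ℝ (Fin d))
    (hψdiff : ∀ i, ∀ t ∈ Set.Icc (a i) (b i),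
      HasDerivWithinAt (ψ i) (ψ' i t) (Set.Icc (a i) (b i)) t)
    (hψcont : ∀ i, ContinuousOn (ψ' i) (Set.Icc (a i) (b i)))
    (hψa : ∀ i, ψ i (a i) = γ (a i)) (hψb : ∀ i, ψ i (b i) = γ (b i))
    (hψ'a : ∀ i, ψ' i (a i) = g (a i)) (hψ'b : ∀ i, ψ' i (b i) = g (b i))
    (ε : ℕ → ℝ) (hε : Filter.Tendsto ε Filter.atTop (nhds 0))
    (hψbound : ∀ i, ∀ t ∈ Set.Ioo (a i) (b i), ‖ψ' i t - g (a i)‖ ≤ ε i)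
    (Γ : ℝ → EuclideanSpace ℝ (Fin d))
    (hΓK : ∀ t ∈ K, Γ t = γ t)
    (hΓψ : ∀ i, ∀ t ∈ Set.Ioo (a i) (b i), Γ t = ψ i t) :
    ∃ D : ℝ → EuclideanSpace ℝ (Fin d),
      (∀ t ∈ K, D t = g t) ∧
      (∀ i, ∀ t ∈ Set.Ioo (a i) (b i), D t = ψ' i t) ∧
      (∀ t ∈ Set.Icc m M, HasDerivWithinAt Γ (D t) (Set.Icc m M) t) ∧
      ContinuousOn D (Set.Icc m M) := by
  classical
  -- ## basic facts
  have hKsub : K ⊆ Icc m M := fun x hx =>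
    ⟨hm ▸ csInf_le hK.bddBelow hx, hM ▸ le_csSup hK.bddAbove hx⟩
  have hmK : m ∈ K := hm ▸ hK.sInf_mem hKne
  have hMK : M ∈ K := hM ▸ hK.sSup_mem hKne
  have gapsub : ∀ i, Ioo (a i) (b i) ⊆ Icc m M \ K := by
    intro i; rw [hcover]; exact subset_iUnion (fun i => Ioo (a i) (b i)) i
  have gapfind : ∀ s ∈ Icc m M, s ∉ K → ∃ i, s ∈ Ioo (a i) (b i) := by
    intro s hs hsK
    have : s ∈ ⋃ i, Ioo (a i) (b i) := hcover ▸ ⟨hs, hsK⟩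
    exact mem_iUnion.1 this
  have gapuniq : ∀ i j s, s ∈ Ioo (a i) (b i) → s ∈ Ioo (a j) (b j) → i = j := by
    intro i j s hi hj
    by_contra h
    exact Set.disjoint_left.1 (hdisj h) hi hj
  -- ## ε bounds on closed gaps
  have epos : ∀ i, a i < b i → 0 ≤ ε i := fun i h =>
    le_trans (norm_nonneg _)
      (hψbound i ((a i + b i) / 2) ⟨by linarith, by linarith⟩)
  have boundIcc : ∀ i, a i < b i → ∀ u ∈ Icc (a i) (b i), ‖ψ' i u - g (a i)‖ ≤ ε i := by
    intro i hi u hu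
    have hcl : u ∈ closure (Ioo (a i) (b i)) := by
      rw [closure_Ioo hi.ne]; exact hu
    have hne : (𝓝[Ioo (a i) (b i)] u).NeBot := mem_closure_iff_nhdsWithin_neBot.1 hcl
    have hcont : ContinuousWithinAt (fun s => ‖ψ' i s - g (a i)‖) (Ioo (a i) (b i)) u :=
      (((hψcont i) u hu).sub continuousWithinAt_const).norm.mono Ioo_subset_Icc_self
    exact le_of_tendsto hcont (eventually_mem_nhdsWithin.mono fun s hs => hψbound i s hs)
  have gbound : ∀ i, a i < b i → ‖g (b i) - g (a i)‖ ≤ ε i := by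
    intro i hi
    have := boundIcc i hi (b i) ⟨hi.le, le_rfl⟩
    rwa [hψ'b i] at this
  -- ## mean value estimates on gaps
  have mvt : ∀ i, a i < b i → ∀ x ∈ Icc (a i) (b i), ∀ y ∈ Icc (a i) (b i),
      ‖ψ i y - ψ i x - (y - x) • g (a i)‖ ≤ ε i * ‖y - x‖ := by
    intro i hi x hx y hy
    have key : ∀ u ∈ Icc (a i) (b i),
        HasDerivWithinAt (fun v => ψ i v - v • g (a i)) (ψ' i u - g (a i))
          (Icc (a i) (b i)) u := by
      intro u hu
      have h2 : HasDerivAt (fun v : ℝ => v • g (a i)) (g (a i)) u := by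
        simpa using (hasDerivAt_id u).smul_const (g (a i))
      exact (hψdiff i u hu).sub h2.hasDerivWithinAt
    have hmain := (convex_Icc (a i) (b i)).norm_image_sub_le_of_norm_hasDerivWithin_le
      key (fun u hu => boundIcc i hi u hu) hx hy
    have heq : ψ i y - ψ i x - (y - x) • g (a i)
        = (ψ i y - y • g (a i)) - (ψ i x - x • g (a i)) := by module
    rw [heq]; exact hmain
  have mvtB : ∀ i, a i < b i → ∀ s ∈ Icc (a i) (b i),
      ‖ψ i s - ψ i (b i) - (s - b i) • g (b i)‖ ≤ 2 * ε i * ‖s - b i‖ := by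
    intro i hi s hs
    have h1 := mvt i hi (b i) ⟨hi.le, le_rfl⟩ s hs
    have h2 := gbound i hi
    have heq : ψ i s - ψ i (b i) - (s - b i) • g (b i)
        = (ψ i s - ψ i (b i) - (s - b i) • g (a i)) - (s - b i) • (g (b i) - g (a i)) := by
      module
    rw [heq]
    refine (norm_sub_le _ _).trans ?_
    rw [norm_smul]
    nlinarith [norm_nonneg (s - b i), mul_le_mul_of_nonneg_left h2 (norm_nonneg (s - b i))]
  -- ## the glued derivative
  set D : ℝ → EuclideanSpace ℝ (Fin d) :=
    fun s => if hs : ∃ i, s ∈ Ioo (a i) (b i) then ψ' hs.choose s else g s with hD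
  have hDK : ∀ t ∈ K, D t = g t := by
    intro t ht
    have hno : ¬∃ i, t ∈ Ioo (a i) (b i) := by
      rintro ⟨i, hi⟩; exact (gapsub i hi).2 ht
    simp only [hD, dif_neg hno]
  have hDgap : ∀ i, ∀ t ∈ Ioo (a i) (b i), D t = ψ' i t := by
    intro i t ht
    have hex : ∃ j, t ∈ Ioo (a j) (b j) := ⟨i, ht⟩
    have := gapuniq hex.choose i t hex.choose_spec ht
    simp only [hD, dif_pos hex, this]
  -- ## at points of the gaps
  have gappt : ∀ i, ∀ t ∈ Ioo (a i) (b i),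
      HasDerivWithinAt Γ (D t) (Icc m M) t ∧ ContinuousWithinAt D (Icc m M) t := by
    intro i t ht
    have hIcc_nhds : Icc (a i) (b i) ∈ 𝓝 t := Icc_mem_nhds ht.1 ht.2
    have hIoo_nhds : Ioo (a i) (b i) ∈ 𝓝 t := Ioo_mem_nhds ht.1 ht.2
    have hψd : HasDerivAt (ψ i) (ψ' i t) t :=
      (hψdiff i t (Ioo_subset_Icc_self ht)).hasDerivAt hIcc_nhds
    have hΓeq : Γ =ᶠ[𝓝 t] ψ i :=
      Filter.eventuallyEq_of_mem hIoo_nhds fun s hs => hΓψ i s hs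
    have hΓd : HasDerivAt Γ (ψ' i t) t := hψd.congr_of_eventuallyEq hΓeq
    have hDeq : ψ' i =ᶠ[𝓝 t] D :=
      Filter.eventuallyEq_of_mem hIoo_nhds fun s hs => (hDgap i s hs).symm
    have hcont : ContinuousAt (ψ' i) t :=
      ((hψcont i) t (Ioo_subset_Icc_self ht)).continuousAt hIcc_nhds
    exact ⟨(hDgap i t ht) ▸ hΓd.hasDerivWithinAt,
      (hcont.congr hDeq).continuousWithinAt⟩
  -- ## key quantitative lemma, right side
  have keyR : ∀ t ∈ K, (∀ j, a j = t → b j ≤ t) → ∀ c' > 0, ∃ δ > 0,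
      ∀ s ∈ Icc m M, t < s → s - t < δ →
      ((s ∈ K ∧ ‖g s - g t‖ < c' ∧ ‖γ s - γ t - (s - t) • g t‖ ≤ c' * ‖s - t‖) ∨
       ∃ i, s ∈ Ioo (a i) (b i) ∧ t < a i ∧ a i < b i ∧ ε i < c' ∧
         ‖g (a i) - g t‖ < c' ∧
         ‖γ (a i) - γ t - (a i - t) • g t‖ ≤ c' * ‖a i - t‖) := by
    intro t htK hnadj c' hc'
    obtain ⟨δ1, hδ1pos, hδ1⟩ := Metric.tendsto_nhdsWithin_nhds.1 (hgcont t htK) c' hc'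
    have h2 := Asymptotics.isLittleO_iff.1
      (hasDerivWithinAt_iff_isLittleO.1 (hγdiff t htK)) hc'
    obtain ⟨δ2, hδ2pos, hδ2⟩ := Metric.mem_nhdsWithin_iff.1 h2
    obtain ⟨N, hN⟩ := Filter.eventually_atTop.1 (hε.eventually_lt_const hc')
    obtain ⟨δ3, hδ3pos, hδ3⟩ : ∃ δ3 > 0, ∀ i < N, t < a i → δ3 ≤ a i - t := by
      set S : Finset ℕ := (Finset.range N).filter (fun i => t < a i) with hS
      by_cases hSne : S.Nonempty
      · refine ⟨S.inf' hSne (fun i => a i - t), ?_, ?_⟩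
        · rw [gt_iff_lt, Finset.lt_inf'_iff]
          intro i hi
          have := (Finset.mem_filter.1 hi).2
          linarith
        · intro i hiN hti
          exact Finset.inf'_le _ (Finset.mem_filter.2 ⟨Finset.mem_range.2 hiN, hti⟩)
      · exact ⟨1, one_pos, fun i hiN hti =>
          absurd ⟨i, Finset.mem_filter.2 ⟨Finset.mem_range.2 hiN, hti⟩⟩ hSne⟩
    refine ⟨min (min δ1 δ2) δ3, by positivity, ?_⟩
    intro s hs hts hsδ
    have hsδ1 : s - t < δ1 := lt_of_lt_of_le hsδ (le_trans (min_le_left _ _) (min_le_left _ _))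
    have hsδ2 : s - t < δ2 := lt_of_lt_of_le hsδ (le_trans (min_le_left _ _) (min_le_right _ _))
    have hsδ3 : s - t < δ3 := lt_of_lt_of_le hsδ (min_le_right _ _)
    by_cases hsK : s ∈ K
    · left
      refine ⟨hsK, ?_, ?_⟩
      · rw [← dist_eq_norm]
        exact hδ1 hsK (by rw [Real.dist_eq, abs_of_pos (by linarith)]; exact hsδ1)
      · have := hδ2 ⟨by rw [Metric.mem_ball, Real.dist_eq, abs_of_pos (by linarith)]; exact hsδ2, hs⟩
        exact this
    · obtain ⟨i, hi⟩ := gapfind s hs hsK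
      have htno : t ∉ Ioo (a i) (b i) := fun h => (gapsub i h).2 htK
      have htai : t ≤ a i := by
        by_contra h
        push_neg at h
        have hbi : b i ≤ t := by
          by_contra h2
          push_neg at h2
          exact htno ⟨h, h2⟩
        linarith [hi.2]
      have hlt : t < a i := by
        rcases eq_or_lt_of_le htai with h | h
        · exact absurd (hnadj i h.symm) (not_le.2 (lt_trans hts hi.2))
        · exact h
      have haiN : N ≤ i := by
        by_contra h
        push_neg at h
        have := hδ3 i h hlt
        linarith [hi.1]
      have haiIcc : a i ∈ Icc m M := hKsub (haK i)
      have haiδ1 : a i - t < δ1 := by linarith [hi.1]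
      have haiδ2 : a i - t < δ2 := by linarith [hi.1]
      right
      refine ⟨i, hi, hlt, lt_trans hi.1 hi.2, hN i haiN, ?_, ?_⟩
      · rw [← dist_eq_norm]
        exact hδ1 (haK i) (by rw [Real.dist_eq, abs_of_pos (by linarith)]; exact haiδ1)
      · exact hδ2 ⟨by rw [Metric.mem_ball, Real.dist_eq, abs_of_pos (by linarith)]; exact haiδ2,
          haiIcc⟩
  -- ## key quantitative lemma, left side
  have keyL : ∀ t ∈ K, (∀ j, b j = t → t ≤ a j) → ∀ c' > 0, ∃ δ > 0,
      ∀ s ∈ Icc m M, s < t → t - s < δ →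
      ((s ∈ K ∧ ‖g s - g t‖ < c' ∧ ‖γ s - γ t - (s - t) • g t‖ ≤ c' * ‖s - t‖) ∨
       ∃ i, s ∈ Ioo (a i) (b i) ∧ b i < t ∧ a i < b i ∧ ε i < c' ∧
         ‖g (b i) - g t‖ < c' ∧
         ‖γ (b i) - γ t - (b i - t) • g t‖ ≤ c' * ‖b i - t‖) := by
    intro t htK hnadj c' hc'
    obtain ⟨δ1, hδ1pos, hδ1⟩ := Metric.tendsto_nhdsWithin_nhds.1 (hgcont t htK) c' hc'
    have h2 := Asymptotics.isLittleO_iff.1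
      (hasDerivWithinAt_iff_isLittleO.1 (hγdiff t htK)) hc'
    obtain ⟨δ2, hδ2pos, hδ2⟩ := Metric.mem_nhdsWithin_iff.1 h2
    obtain ⟨N, hN⟩ := Filter.eventually_atTop.1 (hε.eventually_lt_const hc')
    obtain ⟨δ3, hδ3pos, hδ3⟩ : ∃ δ3 > 0, ∀ i < N, b i < t → δ3 ≤ t - b i := by
      set S : Finset ℕ := (Finset.range N).filter (fun i => b i < t) with hS
      by_cases hSne : S.Nonempty
      · refine ⟨S.inf' hSne (fun i => t - b i), ?_, ?_⟩
        · rw [gt_iff_lt, Finset.lt_inf'_iff]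
          intro i hi
          have := (Finset.mem_filter.1 hi).2
          linarith
        · intro i hiN hti
          exact Finset.inf'_le _ (Finset.mem_filter.2 ⟨Finset.mem_range.2 hiN, hti⟩)
      · exact ⟨1, one_pos, fun i hiN hti =>
          absurd ⟨i, Finset.mem_filter.2 ⟨Finset.mem_range.2 hiN, hti⟩⟩ hSne⟩
    refine ⟨min (min δ1 δ2) δ3, by positivity, ?_⟩
    intro s hs hts hsδ
    have hsδ1 : t - s < δ1 := lt_of_lt_of_le hsδ (le_trans (min_le_left _ _) (min_le_left _ _))
    have hsδ2 : t - s < δ2 := lt_of_lt_of_le hsδ (le_trans (min_le_left _ _) (min_le_right _ _))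
    have hsδ3 : t - s < δ3 := lt_of_lt_of_le hsδ (min_le_right _ _)
    by_cases hsK : s ∈ K
    · left
      refine ⟨hsK, ?_, ?_⟩
      · rw [← dist_eq_norm]
        exact hδ1 hsK (by rw [Real.dist_eq, abs_of_neg (by linarith), neg_sub]; exact hsδ1)
      · exact hδ2 ⟨by rw [Metric.mem_ball, Real.dist_eq, abs_of_neg (by linarith), neg_sub]; exact hsδ2, hs⟩
    · obtain ⟨i, hi⟩ := gapfind s hs hsK
      have htno : t ∉ Ioo (a i) (b i) := fun h => (gapsub i h).2 htK
      have htbi : b i ≤ t := by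
        by_contra h
        push_neg at h
        have hai : t ≤ a i := by
          by_contra h2
          push_neg at h2
          exact htno ⟨h2, h⟩
        linarith [hi.1]
      have hlt : b i < t := by
        rcases eq_or_lt_of_le htbi with h | h
        · exact absurd (hnadj i h) (not_le.2 (lt_trans hi.1 hts))
        · exact h
      have hbiN : N ≤ i := by
        by_contra h
        push_neg at h
        have := hδ3 i h hlt
        linarith [hi.2]
      have hbiIcc : b i ∈ Icc m M := hKsub (hbK i)
      have hbiδ1 : t - b i < δ1 := by linarith [hi.2]
      have hbiδ2 : t - b i < δ2 := by linarith [hi.2]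
      right
      refine ⟨i, hi, hlt, lt_trans hi.1 hi.2, hN i hbiN, ?_, ?_⟩
      · rw [← dist_eq_norm]
        exact hδ1 (hbK i) (by rw [Real.dist_eq, abs_of_neg (by linarith), neg_sub]; exact hbiδ1)
      · exact hδ2 ⟨by rw [Metric.mem_ball, Real.dist_eq, abs_of_neg (by linarith), neg_sub]; exact hbiδ2, hbiIcc⟩
  -- ## right-hand side analysis at points of K
  have Kright : ∀ t ∈ K, HasDerivWithinAt Γ (g t) (Icc m M ∩ Ici t) t ∧
      ContinuousWithinAt D (Icc m M ∩ Ici t) t := by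
    intro t htK
    by_cases hadj : ∃ j, a j = t ∧ t < b j
    · obtain ⟨j, haj, hbj⟩ := hadj
      have hmem : Ico t (b j) ∈ 𝓝[Icc m M ∩ Ici t] t :=
        mem_nhdsWithin.2 ⟨Iio (b j), isOpen_Iio, hbj, fun s hs => ⟨hs.2.2, hs.1⟩⟩
      have hIco : Ico t (b j) ⊆ Icc t (b j) := Ico_subset_Icc_self
      have hΓψj : ∀ s ∈ Ico t (b j), Γ s = ψ j s := by
        intro s hs
        rcases eq_or_lt_of_le hs.1 with h | h
        · rw [← h, hΓK t htK, ← haj, hψa j]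
        · exact hΓψ j s ⟨haj ▸ h, hs.2⟩
      constructor
      · have hd0 := hψdiff j (a j) ⟨le_rfl, hab j⟩
        rw [hψ'a j, haj] at hd0
        have hΓd : HasDerivWithinAt Γ (g t) (Ico t (b j)) t :=
          (hd0.mono hIco).congr hΓψj (hΓψj t ⟨le_rfl, hbj⟩)
        exact hΓd.mono_of_mem_nhdsWithin hmem
      · have hDψj : ∀ s ∈ Ico t (b j), D s = ψ' j s := by
          intro s hs
          rcases eq_or_lt_of_le hs.1 with h | h
          · rw [← h, hDK t htK, ← haj, hψ'a j]
          · exact hDgap j s ⟨haj ▸ h, hs.2⟩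
        have hcψ := (hψcont j) (a j) ⟨le_rfl, hab j⟩
        rw [haj] at hcψ
        have : ContinuousWithinAt D (Ico t (b j)) t :=
          (hcψ.mono hIco).congr hDψj (hDψj t ⟨le_rfl, hbj⟩)
        exact this.mono_of_mem_nhdsWithin hmem
    · have hnadj : ∀ j, a j = t → b j ≤ t := by
        intro j hj
        by_contra h
        push_neg at h
        exact hadj ⟨j, hj, h⟩
      constructor
      · rw [hasDerivWithinAt_iff_isLittleO, Asymptotics.isLittleO_iff]
        intro c hc
        obtain ⟨δ, hδpos, hkey⟩ := keyR t htK hnadj (c / 3) (by linarith)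
        rw [Filter.eventually_iff]
        apply Metric.mem_nhdsWithin_iff.2
        refine ⟨δ, hδpos, ?_⟩
        rintro s ⟨hsball, hsIcc, hsIci⟩
        rcases eq_or_lt_of_le (mem_Ici.1 hsIci) with heq | hlt
        · simp [← heq]
        · have hsδ : s - t < δ := by
            have := Metric.mem_ball.1 hsball
            rw [Real.dist_eq, abs_of_pos (by linarith)] at this
            exact this
          rcases hkey s hsIcc hlt hsδ with ⟨hsK, _, hγb⟩ | ⟨i, hi, htai, habi, hεi, hgb, hγb⟩
          · show ‖Γ s - Γ t - (s - t) • g t‖ ≤ c * ‖s - t‖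
            rw [hΓK s hsK, hΓK t htK]
            exact hγb.trans (mul_le_mul_of_nonneg_right (by linarith) (norm_nonneg _))
          · show ‖Γ s - Γ t - (s - t) • g t‖ ≤ c * ‖s - t‖
            have hsIab : s ∈ Icc (a i) (b i) := ⟨hi.1.le, hi.2.le⟩
            have e1 := mvt i habi (a i) ⟨le_rfl, habi.le⟩ s hsIab
            have heq : Γ s - Γ t - (s - t) • g t
                = (ψ i s - ψ i (a i) - (s - a i) • g (a i))
                  + (s - a i) • (g (a i) - g t)
                  + (γ (a i) - γ t - (a i - t) • g t) := by
              rw [hΓψ i s hi, hΓK t htK, hψa i]; module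
            have hn1 : ‖s - a i‖ ≤ ‖s - t‖ := by
              rw [Real.norm_eq_abs, Real.norm_eq_abs, abs_of_pos (by linarith [hi.1]),
                abs_of_pos (by linarith)]
              linarith
            have hn2 : ‖a i - t‖ ≤ ‖s - t‖ := by
              rw [Real.norm_eq_abs, Real.norm_eq_abs, abs_of_pos (by linarith),
                abs_of_pos (by linarith)]
              linarith [hi.1]
            have t1 : ε i * ‖s - a i‖ ≤ c / 3 * ‖s - t‖ :=
              mul_le_mul hεi.le hn1 (norm_nonneg _) (by linarith)
            have t2 : ‖s - a i‖ * ‖g (a i) - g t‖ ≤ ‖s - t‖ * (c / 3) :=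
              mul_le_mul hn1 hgb.le (norm_nonneg _) (norm_nonneg _)
            have t3 : c / 3 * ‖a i - t‖ ≤ c / 3 * ‖s - t‖ :=
              mul_le_mul_of_nonneg_left hn2 (by linarith)
            rw [heq]
            calc ‖ψ i s - ψ i (a i) - (s - a i) • g (a i)
                  + (s - a i) • (g (a i) - g t)
                  + (γ (a i) - γ t - (a i - t) • g t)‖
                ≤ ‖ψ i s - ψ i (a i) - (s - a i) • g (a i)‖
                  + ‖(s - a i) • (g (a i) - g t)‖
                  + ‖γ (a i) - γ t - (a i - t) • g t‖ := norm_add₃_le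
              _ ≤ ε i * ‖s - a i‖ + ‖s - a i‖ * ‖g (a i) - g t‖ + c / 3 * ‖a i - t‖ := by
                  rw [norm_smul]
                  exact add_le_add (add_le_add e1 le_rfl) hγb
              _ ≤ c * ‖s - t‖ := by linarith
      · have hDt : D t = g t := hDK t htK
        have : Filter.Tendsto D (𝓝[Icc m M ∩ Ici t] t) (𝓝 (g t)) := by
          rw [Metric.tendsto_nhdsWithin_nhds]
          intro e he
          obtain ⟨δ, hδpos, hkey⟩ := keyR t htK hnadj (e / 2) (by linarith)
          refine ⟨δ, hδpos, ?_⟩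
          rintro s ⟨hsIcc, hsIci⟩ hdist
          rcases eq_or_lt_of_le (mem_Ici.1 hsIci) with heqs | hlt
          · rw [← heqs, hDt]; simpa using he
          · have hsδ : s - t < δ := by
              rw [Real.dist_eq, abs_of_pos (by linarith)] at hdist
              exact hdist
            rcases hkey s hsIcc hlt hsδ with ⟨hsK, hgb, _⟩ | ⟨i, hi, htai, habi, hεi, hgb, _⟩
            · rw [hDK s hsK, dist_eq_norm]
              linarith
            · rw [hDgap i s hi, dist_eq_norm]
              have e1 := boundIcc i habi s ⟨hi.1.le, hi.2.le⟩
              calc ‖ψ' i s - g t‖ ≤ ‖ψ' i s - g (a i)‖ + ‖g (a i) - g t‖ :=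
                    norm_sub_le_norm_sub_add_norm_sub _ _ _
                _ < e := by linarith
        unfold ContinuousWithinAt
        rw [hDt]
        exact this
  -- ## left-hand side analysis at points of K
  have Kleft : ∀ t ∈ K, HasDerivWithinAt Γ (g t) (Icc m M ∩ Iic t) t ∧
      ContinuousWithinAt D (Icc m M ∩ Iic t) t := by
    intro t htK
    by_cases hadj : ∃ j, b j = t ∧ a j < t
    · obtain ⟨j, hbj, haj⟩ := hadj
      have hmem : Ioc (a j) t ∈ 𝓝[Icc m M ∩ Iic t] t :=
        mem_nhdsWithin.2 ⟨Ioi (a j), isOpen_Ioi, haj, fun s hs => ⟨hs.1, hs.2.2⟩⟩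
      have hIoc : Ioc (a j) t ⊆ Icc (a j) t := Ioc_subset_Icc_self
      have hΓψj : ∀ s ∈ Ioc (a j) t, Γ s = ψ j s := by
        intro s hs
        rcases eq_or_lt_of_le hs.2 with h | h
        · rw [h, hΓK t htK, ← hbj, hψb j]
        · exact hΓψ j s ⟨hs.1, hbj ▸ h⟩
      constructor
      · have hd0 := hψdiff j (b j) ⟨hab j, le_rfl⟩
        rw [hψ'b j, hbj] at hd0
        have hΓd : HasDerivWithinAt Γ (g t) (Ioc (a j) t) t :=
          (hd0.mono hIoc).congr hΓψj (hΓψj t ⟨haj, le_rfl⟩)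
        exact hΓd.mono_of_mem_nhdsWithin hmem
      · have hDψj : ∀ s ∈ Ioc (a j) t, D s = ψ' j s := by
          intro s hs
          rcases eq_or_lt_of_le hs.2 with h | h
          · rw [h, hDK t htK, ← hbj, hψ'b j]
          · exact hDgap j s ⟨hs.1, hbj ▸ h⟩
        have hcψ := (hψcont j) (b j) ⟨hab j, le_rfl⟩
        rw [hbj] at hcψ
        have : ContinuousWithinAt D (Ioc (a j) t) t :=
          (hcψ.mono hIoc).congr hDψj (hDψj t ⟨haj, le_rfl⟩)
        exact this.mono_of_mem_nhdsWithin hmem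
    · have hnadj : ∀ j, b j = t → t ≤ a j := by
        intro j hj
        by_contra h
        push_neg at h
        exact hadj ⟨j, hj, h⟩
      constructor
      · rw [hasDerivWithinAt_iff_isLittleO, Asymptotics.isLittleO_iff]
        intro c hc
        obtain ⟨δ, hδpos, hkey⟩ := keyL t htK hnadj (c / 4) (by linarith)
        rw [Filter.eventually_iff]
        apply Metric.mem_nhdsWithin_iff.2
        refine ⟨δ, hδpos, ?_⟩
        rintro s ⟨hsball, hsIcc, hsIic⟩
        rcases eq_or_lt_of_le (mem_Iic.1 hsIic) with heq | hlt
        · simp [heq]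
        · have hsδ : t - s < δ := by
            have := Metric.mem_ball.1 hsball
            rw [Real.dist_eq, abs_of_neg (by linarith), neg_sub] at this
            exact this
          rcases hkey s hsIcc hlt hsδ with ⟨hsK, _, hγb⟩ | ⟨i, hi, htbi, habi, hεi, hgb, hγb⟩
          · show ‖Γ s - Γ t - (s - t) • g t‖ ≤ c * ‖s - t‖
            rw [hΓK s hsK, hΓK t htK]
            exact hγb.trans (mul_le_mul_of_nonneg_right (by linarith) (norm_nonneg _))
          · show ‖Γ s - Γ t - (s - t) • g t‖ ≤ c * ‖s - t‖
            have hsIab : s ∈ Icc (a i) (b i) := ⟨hi.1.le, hi.2.le⟩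
            have e1 := mvtB i habi s hsIab
            have heq : Γ s - Γ t - (s - t) • g t
                = (ψ i s - ψ i (b i) - (s - b i) • g (b i))
                  + (s - b i) • (g (b i) - g t)
                  + (γ (b i) - γ t - (b i - t) • g t) := by
              rw [hΓψ i s hi, hΓK t htK, hψb i]; module
            have hn1 : ‖s - b i‖ ≤ ‖s - t‖ := by
              rw [Real.norm_eq_abs, Real.norm_eq_abs, abs_of_neg (by linarith [hi.2]),
                abs_of_neg (by linarith)]
              linarith [hi.2]
            have hn2 : ‖b i - t‖ ≤ ‖s - t‖ := by
              rw [Real.norm_eq_abs, Real.norm_eq_abs, abs_of_neg (by linarith),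
                abs_of_neg (by linarith)]
              linarith [hi.2]
            have t1 : 2 * ε i * ‖s - b i‖ ≤ 2 * (c / 4) * ‖s - t‖ :=
              mul_le_mul (by linarith) hn1 (norm_nonneg _) (by linarith)
            have t2 : ‖s - b i‖ * ‖g (b i) - g t‖ ≤ ‖s - t‖ * (c / 4) :=
              mul_le_mul hn1 hgb.le (norm_nonneg _) (norm_nonneg _)
            have t3 : c / 4 * ‖b i - t‖ ≤ c / 4 * ‖s - t‖ :=
              mul_le_mul_of_nonneg_left hn2 (by linarith)
            rw [heq]
            calc ‖ψ i s - ψ i (b i) - (s - b i) • g (b i)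
                  + (s - b i) • (g (b i) - g t)
                  + (γ (b i) - γ t - (b i - t) • g t)‖
                ≤ ‖ψ i s - ψ i (b i) - (s - b i) • g (b i)‖
                  + ‖(s - b i) • (g (b i) - g t)‖
                  + ‖γ (b i) - γ t - (b i - t) • g t‖ := norm_add₃_le
              _ ≤ 2 * ε i * ‖s - b i‖ + ‖s - b i‖ * ‖g (b i) - g t‖ + c / 4 * ‖b i - t‖ := by
                  rw [norm_smul]
                  exact add_le_add (add_le_add e1 le_rfl) hγb
              _ ≤ c * ‖s - t‖ := by linarith
      · have hDt : D t = g t := hDK t htK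
        have : Filter.Tendsto D (𝓝[Icc m M ∩ Iic t] t) (𝓝 (g t)) := by
          rw [Metric.tendsto_nhdsWithin_nhds]
          intro e he
          obtain ⟨δ, hδpos, hkey⟩ := keyL t htK hnadj (e / 3) (by linarith)
          refine ⟨δ, hδpos, ?_⟩
          rintro s ⟨hsIcc, hsIic⟩ hdist
          rcases eq_or_lt_of_le (mem_Iic.1 hsIic) with heqs | hlt
          · rw [heqs, hDt]; simpa using he
          · have hsδ : t - s < δ := by
              rw [Real.dist_eq, abs_of_neg (by linarith), neg_sub] at hdist
              exact hdist
            rcases hkey s hsIcc hlt hsδ with ⟨hsK, hgb, _⟩ | ⟨i, hi, htbi, habi, hεi, hgb, _⟩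
            · rw [hDK s hsK, dist_eq_norm]
              linarith
            · rw [hDgap i s hi, dist_eq_norm]
              have e1 := boundIcc i habi s ⟨hi.1.le, hi.2.le⟩
              have e2 := gbound i habi
              calc ‖ψ' i s - g t‖ ≤ ‖ψ' i s - g (b i)‖ + ‖g (b i) - g t‖ :=
                    norm_sub_le_norm_sub_add_norm_sub _ _ _
                _ ≤ (‖ψ' i s - g (a i)‖ + ‖g (a i) - g (b i)‖) + ‖g (b i) - g t‖ :=
                    add_le_add (norm_sub_le_norm_sub_add_norm_sub _ _ _) le_rfl
                _ < e := by
                    rw [norm_sub_rev (g (a i))] at *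
                    linarith
        unfold ContinuousWithinAt
        rw [hDt]
        exact this
  -- ## conclusion
  refine ⟨D, hDK, hDgap, ?_, ?_⟩
  · intro t ht
    by_cases htK : t ∈ K
    · rw [hDK t htK]
      have hu := ((Kright t htK).1).union ((Kleft t htK).1)
      exact hu.mono fun s hs => (le_total t s).elim (fun h => Or.inl ⟨hs, h⟩)
        (fun h => Or.inr ⟨hs, h⟩)
    · obtain ⟨i, hi⟩ := gapfind t ht htK
      exact (gappt i t hi).1
  · intro t ht
    by_cases htK : t ∈ K
    · have hu := ((Kright t htK).2).union ((Kleft t htK).2)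
      exact hu.mono fun s hs => (le_total t s).elim (fun h => Or.inl ⟨hs, h⟩)
        (fun h => Or.inr ⟨hs, h⟩)
    · obtain ⟨i, hi⟩ := gapfind t ht htK
      exact (gappt i t hi).2
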